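/- Let μ be a joint distribution of discrete (X,Y) and η : 𝒳 → 𝒰. For any joint distribution μ̃ on 𝒳 × 𝒴 under which X and Y are conditionally independent given η(X), D(μ ‖ μ̃) ≥ I(X;Y|η(X)), where the conditional mutual information is computed under μ. -/

import Mathlib

open Finset

noncomputable section

/-- Marginal distribution of the first coordinate of a joint distribution. -/
def margX {X Y : Type*} [Fintype Y] (μ : X → Y → ℝ) (x : X) : ℝ := ∑ y, μ x y

/-- Marginal distribution of the second coordinate. -/
def margY {X Y : Type*} [Fintype X] (μ : X → Y → ℝ) (y : Y) : ℝ := ∑ x, μ x y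

/-- Distribution of `U = η X`. -/
def margU {X Y U : Type*} [Fintype X] [Fintype Y] [DecidableEq U]
    (μ : X → Y → ℝ) (η : X → U) (u : U) : ℝ :=
  ∑ x, if η x = u then margX μ x else 0

/-- Joint probability `P(Y = y, η X = u)`. -/
def margYU {X Y U : Type*} [Fintype X] [DecidableEq U]
    (μ : X → Y → ℝ) (η : X → U) (y : Y) (u : U) : ℝ :=
  ∑ x, if η x = u then μ x y else 0

/-- Joint distribution of the pair `(η X, Y)`. -/
def jointUY {X Y U : Type*} [Fintype X] [DecidableEq U]
    (μ : X → Y → ℝ) (η : X → U) : U → Y → ℝ :=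
  fun u y => margYU μ η y u

/-- Shannon mutual information `I(X;Y)` of a joint distribution (natural log). -/
def MI {X Y : Type*} [Fintype X] [Fintype Y] (μ : X → Y → ℝ) : ℝ :=
  ∑ x, ∑ y, μ x y * Real.log (μ x y / (margX μ x * margY μ y))

/-- Conditional Shannon entropy `H(Y|X)`. -/
def condEnt {X Y : Type*} [Fintype X] [Fintype Y] (μ : X → Y → ℝ) : ℝ :=
  -∑ x, ∑ y, μ x y * Real.log (μ x y / margX μ x)

/-- Conditional mutual information `I(X;Y|U)` where `U = η X` is a deterministic
function of `X`. -/
def condMI {X Y U : Type*} [Fintype X] [Fintype Y] [DecidableEq U]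
    (μ : X → Y → ℝ) (η : X → U) : ℝ :=
  ∑ x, ∑ y, μ x y *
    Real.log (μ x y * margU μ η (η x) / (margX μ x * margYU μ η y (η x)))

/-- `μ` is a probability distribution on `X × Y`. -/
def IsDist {X Y : Type*} [Fintype X] [Fintype Y] (μ : X → Y → ℝ) : Prop :=
  (∀ x y, 0 ≤ μ x y) ∧ ∑ x, ∑ y, μ x y = 1

/-- `X` and `Y` are conditionally independent given `U = η X`: for every `u` with
`P(U = u) > 0`, `P(X = x, Y = y | U = u) = P(X = x | U = u) · P(Y = y | U = u)`
(stated multiplied through by `P(U = u)²`). -/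
def CondIndep {X Y U : Type*} [Fintype X] [Fintype Y] [DecidableEq U]
    (μ : X → Y → ℝ) (η : X → U) : Prop :=
  ∀ u, 0 < margU μ η u → ∀ x y,
    (if η x = u then μ x y else 0) * margU μ η u =
      (if η x = u then margX μ x else 0) * margYU μ η y u

/-- Cross-entropy risk `E_{(X,Y)∼μ}[− log v(Y|X)]` of a predictive conditional
distribution `v`. -/
def risk {X Y : Type*} [Fintype X] [Fintype Y] (μ : X → Y → ℝ) (v : X → Y → ℝ) : ℝ :=
  ∑ x, ∑ y, μ x y * (-Real.log (v x y))

/-- Kullback–Leibler divergence between two joint distributions on `X × Y`. -/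
def KL {X Y : Type*} [Fintype X] [Fintype Y] (μ ν : X → Y → ℝ) : ℝ :=
  ∑ x, ∑ y, μ x y * Real.log (μ x y / ν x y)

/-- Averaged conditional KL divergence `D(μ_{Y|X} ‖ v | μ_X)`. -/
def avgKL {X Y : Type*} [Fintype X] [Fintype Y] (μ : X → Y → ℝ) (v : X → Y → ℝ) : ℝ :=
  ∑ x, margX μ x * ∑ y,
    (μ x y / margX μ x) * Real.log ((μ x y / margX μ x) / v x y)

/-- Averaged conditional KL divergence in the latent domain:
`D(μ_{Y|U} ‖ v | μ_U)` for the encoder `η`. -/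
def decKL {X Y U : Type*} [Fintype X] [Fintype Y] [Fintype U] [DecidableEq U]
    (μ : X → Y → ℝ) (η : X → U) (v : U → Y → ℝ) : ℝ :=
  ∑ u, margU μ η u * ∑ y,
    (margYU μ η y u / margU μ η u) *
      Real.log ((margYU μ η y u / margU μ η u) / v u y)

set_option linter.unusedSectionVars false

lemma pt_gibbs {p q : ℝ} (hp : 0 ≤ p) (hq : 0 ≤ q) (h0 : q = 0 → p = 0) :
    p - q ≤ p * Real.log (p / q) := by
  rcases hp.eq_or_lt with h | h
  · simp [← h]; linarith
  · have hq' : 0 < q := by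
      rcases hq.eq_or_lt with h' | h'
      · exact absurd (h0 h'.symm) h.ne'
      · exact h'
    have hlog : Real.log (q / p) ≤ q / p - 1 := Real.log_le_sub_one_of_pos (by positivity)
    have hinv : Real.log (p / q) = -Real.log (q / p) := by
      rw [← Real.log_inv]; congr 1; field_simp
    rw [hinv]
    have h2 : p * (q / p - 1) = q - p := by field_simp
    nlinarith

lemma gibbs_sum {ι : Type*} [Fintype ι] (p q : ι → ℝ) (hp : ∀ i, 0 ≤ p i)
    (hq : ∀ i, 0 ≤ q i) (h0 : ∀ i, q i = 0 → p i = 0) :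
    (∑ i, p i) - (∑ i, q i) ≤ ∑ i, p i * Real.log (p i / q i) := by
  rw [← Finset.sum_sub_distrib]
  exact Finset.sum_le_sum fun i _ => pt_gibbs (hp i) (hq i) (h0 i)

section aux
variable {X Y U : Type*} [Fintype X] [Fintype Y] [Fintype U] [DecidableEq U]
variable (μ : X → Y → ℝ) (η : X → U)

lemma margX_nonneg (h : ∀ x y, 0 ≤ μ x y) (x : X) : 0 ≤ margX μ x :=
  Finset.sum_nonneg fun y _ => h x y

lemma le_margX (h : ∀ x y, 0 ≤ μ x y) (x : X) (y : Y) : μ x y ≤ margX μ x :=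
  Finset.single_le_sum (fun y _ => h x y) (mem_univ y)

lemma margYU_nonneg (h : ∀ x y, 0 ≤ μ x y) (y : Y) (u : U) : 0 ≤ margYU μ η y u :=
  Finset.sum_nonneg fun x _ => by split <;> [exact h x y; exact le_rfl]

lemma margU_nonneg (h : ∀ x y, 0 ≤ μ x y) (u : U) : 0 ≤ margU μ η u :=
  Finset.sum_nonneg fun x _ => by split <;> [exact margX_nonneg μ h x; exact le_rfl]

lemma le_margYU (h : ∀ x y, 0 ≤ μ x y) (x : X) (y : Y) : μ x y ≤ margYU μ η y (η x) := by
  have : μ x y = if η x = η x then μ x y else 0 := by simp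
  rw [this]
  exact Finset.single_le_sum (f := fun x' => if η x' = η x then μ x' y else 0)
    (fun x' _ => by split <;> [exact h x' y; exact le_rfl]) (mem_univ x)

lemma margX_le_margU (h : ∀ x y, 0 ≤ μ x y) (x : X) : margX μ x ≤ margU μ η (η x) := by
  have : margX μ x = if η x = η x then margX μ x else 0 := by simp
  rw [this]
  exact Finset.single_le_sum (f := fun x' => if η x' = η x then margX μ x' else 0)
    (fun x' _ => by split <;> [exact margX_nonneg μ h x'; exact le_rfl]) (mem_univ x)

lemma sum_margYU (u : U) : ∑ y, margYU μ η y u = margU μ η u := by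
  unfold margYU margU
  rw [Finset.sum_comm]
  refine Finset.sum_congr rfl fun x _ => ?_
  split <;> simp [margX]

lemma sum_margU (hμ : ∑ x, ∑ y, μ x y = 1) : ∑ u, margU μ η u = 1 := by
  unfold margU
  rw [Finset.sum_comm]
  rw [← hμ]
  refine Finset.sum_congr rfl fun x _ => ?_
  rw [Finset.sum_ite_eq univ (η x) (fun _ => margX μ x)]
  simp [margX]

end aux

/-- for any distribution `ν` under which `X ⟂ Y | η(X)` (and w.r.t.
which `μ` is absolutely continuous), `D(μ‖ν) ≥ I(X;Y|η(X))` (computed under `μ`). -/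
theorem stmt9 {X Y U : Type*} [Fintype X] [Fintype Y] [Fintype U] [DecidableEq U]
    (μ ν : X → Y → ℝ) (η : X → U) (hμ : IsDist μ) (hν : IsDist ν)
    (hci : CondIndep ν η) (habs : ∀ x y, ν x y = 0 → μ x y = 0) :
    condMI μ η ≤ KL μ ν := by
  obtain ⟨hμ0, hμ1⟩ := hμ
  obtain ⟨hν0, hν1⟩ := hν
  -- zero propagation
  have zX : ∀ x, margX ν x = 0 → margX μ x = 0 := by
    intro x h
    have h' := (Finset.sum_eq_zero_iff_of_nonneg (fun y _ => hν0 x y)).mp h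
    exact Finset.sum_eq_zero fun y _ => habs x y (h' y (mem_univ y))
  have zYU : ∀ y u, margYU ν η y u = 0 → margYU μ η y u = 0 := by
    intro y u h
    have h' := (Finset.sum_eq_zero_iff_of_nonneg
      (fun x _ => by split <;> [exact hν0 x y; exact le_rfl])).mp h
    refine Finset.sum_eq_zero fun x _ => ?_
    have := h' x (mem_univ x)
    split
    · next hx => rw [if_pos hx] at this; exact habs x y this
    · rfl
  have zU : ∀ u, margU ν η u = 0 → margU μ η u = 0 := by
    intro u h
    have h' := (Finset.sum_eq_zero_iff_of_nonneg
      (fun x _ => by split <;> [exact margX_nonneg ν hν0 x; exact le_rfl])).mp h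
    refine Finset.sum_eq_zero fun x _ => ?_
    have := h' x (mem_univ x)
    split
    · next hx => rw [if_pos hx] at this; exact zX x this
    · rfl
  set A : ℝ := ∑ x, margX μ x * Real.log (margX μ x / margX ν x) with hA
  set B : ℝ := ∑ u, ∑ y, margYU μ η y u *
      Real.log ((margYU μ η y u / margU μ η u) / (margYU ν η y u / margU ν η u)) with hB
  have hterm : ∀ x y,
      μ x y * Real.log (μ x y / ν x y)
        - μ x y * Real.log (μ x y * margU μ η (η x) / (margX μ x * margYU μ η y (η x)))
      = μ x y * Real.log (margX μ x / margX ν x)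
        + μ x y * Real.log ((margYU μ η y (η x) / margU μ η (η x))
            / (margYU ν η y (η x) / margU ν η (η x))) := by
    intro x y
    rcases (hμ0 x y).eq_or_lt with h | h
    · simp [← h]
    · have hmX : 0 < margX μ x := lt_of_lt_of_le h (le_margX μ hμ0 x y)
      have hmYU : 0 < margYU μ η y (η x) := lt_of_lt_of_le h (le_margYU μ η hμ0 x y)
      have hmU : 0 < margU μ η (η x) := lt_of_lt_of_le hmX (margX_le_margU μ η hμ0 x)
      have hνxy : 0 < ν x y := by
        rcases (hν0 x y).eq_or_lt with h' | h'
        · exact absurd (habs x y h'.symm) h.ne'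
        · exact h'
      have hνX : 0 < margX ν x := lt_of_lt_of_le hνxy (le_margX ν hν0 x y)
      have hνYU : 0 < margYU ν η y (η x) := lt_of_lt_of_le hνxy (le_margYU ν η hν0 x y)
      have hνU : 0 < margU ν η (η x) := lt_of_lt_of_le hνX (margX_le_margU ν η hν0 x)
      have hcond : ν x y * margU ν η (η x) = margX ν x * margYU ν η y (η x) := by
        have := hci (η x) hνU x y
        simpa using this
      have hlog : Real.log (ν x y) + Real.log (margU ν η (η x))
          = Real.log (margX ν x) + Real.log (margYU ν η y (η x)) := by
        have := congrArg Real.log hcond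
        rwa [Real.log_mul hνxy.ne' hνU.ne', Real.log_mul hνX.ne' hνYU.ne'] at this
      rw [Real.log_div h.ne' hνxy.ne',
        show μ x y * margU μ η (η x) / (margX μ x * margYU μ η y (η x))
          = μ x y * margU μ η (η x) / margX μ x / margYU μ η y (η x) by ring,
        Real.log_div (by positivity) hmYU.ne', Real.log_div (by positivity) hmX.ne',
        Real.log_mul h.ne' hmU.ne',
        Real.log_div hmX.ne' hνX.ne',
        Real.log_div (by positivity) (by positivity),
        Real.log_div hmYU.ne' hmU.ne', Real.log_div hνYU.ne' hνU.ne']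
      linear_combination (-(μ x y)) * hlog
  have key : KL μ ν - condMI μ η = A + B := by
    unfold KL condMI
    rw [← Finset.sum_sub_distrib]
    have step : ∀ x, (∑ y, μ x y * Real.log (μ x y / ν x y))
        - ∑ y, μ x y * Real.log (μ x y * margU μ η (η x) / (margX μ x * margYU μ η y (η x)))
        = margX μ x * Real.log (margX μ x / margX ν x)
          + ∑ y, μ x y * Real.log ((margYU μ η y (η x) / margU μ η (η x))
              / (margYU ν η y (η x) / margU ν η (η x))) := by
      intro x
      rw [← Finset.sum_sub_distrib]
      have : ∀ y ∈ (univ : Finset Y),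
          μ x y * Real.log (μ x y / ν x y)
          - μ x y * Real.log (μ x y * margU μ η (η x) / (margX μ x * margYU μ η y (η x)))
          = μ x y * Real.log (margX μ x / margX ν x)
            + μ x y * Real.log ((margYU μ η y (η x) / margU μ η (η x))
                / (margYU ν η y (η x) / margU ν η (η x))) := fun y _ => hterm x y
      rw [Finset.sum_congr rfl this, Finset.sum_add_distrib, ← Finset.sum_mul]
      rfl
    rw [Finset.sum_congr rfl fun x _ => step x, Finset.sum_add_distrib, hA]
    congr 1
    -- regroup the second term by fibers of η
    have : ∀ x, (∑ y, μ x y * Real.log ((margYU μ η y (η x) / margU μ η (η x))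
            / (margYU ν η y (η x) / margU ν η (η x))))
        = ∑ u, ∑ y, (if η x = u then μ x y else 0) *
            Real.log ((margYU μ η y u / margU μ η u) / (margYU ν η y u / margU ν η u)) := by
      intro x
      rw [Finset.sum_comm]
      refine Finset.sum_congr rfl fun y _ => ?_
      rw [show ∀ f : U → ℝ, ∑ u, (if η x = u then μ x y else 0) * f u
          = ∑ u, if η x = u then μ x y * f u else 0 by
            intro f; refine Finset.sum_congr rfl fun u _ => ?_; split <;> simp]
      rw [Finset.sum_ite_eq univ (η x) (fun u => μ x y *
        Real.log ((margYU μ η y u / margU μ η u) / (margYU ν η y u / margU ν η u)))]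
      simp
    rw [Finset.sum_congr rfl fun x _ => this x, Finset.sum_comm, hB]
    refine Finset.sum_congr rfl fun u _ => ?_
    rw [Finset.sum_comm]
    refine Finset.sum_congr rfl fun y _ => ?_
    rw [← Finset.sum_mul]
    rfl
  have hA0 : 0 ≤ A := by
    have h1 : ∑ x, margX μ x = 1 := by rw [← hμ1]; rfl
    have h2 : ∑ x, margX ν x = 1 := by rw [← hν1]; rfl
    have := gibbs_sum (margX μ) (margX ν) (margX_nonneg μ hμ0) (margX_nonneg ν hν0) zX
    rw [h1, h2] at this
    linarith
  have hB0 : 0 ≤ B := by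
    rw [hB]
    refine Finset.sum_nonneg fun u _ => ?_
    rcases (margU_nonneg μ η hμ0 u).eq_or_lt with hu | hu
    · refine le_of_eq (Finset.sum_eq_zero fun y _ => ?_).symm
      have : margYU μ η y u = 0 := by
        have hle : margYU μ η y u ≤ margU μ η u := by
          rw [← sum_margYU μ η u]
          exact Finset.single_le_sum (fun y' _ => margYU_nonneg μ η hμ0 y' u) (mem_univ y)
        exact le_antisymm (hu ▸ hle) (margYU_nonneg μ η hμ0 y u)
      rw [this, zero_mul]
    · have hνu : 0 < margU ν η u := by
        rcases (margU_nonneg ν η hν0 u).eq_or_lt with h' | h'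
        · exact absurd (zU u h'.symm) hu.ne'
        · exact h'
      set p : Y → ℝ := fun y => margYU μ η y u / margU μ η u with hp
      set q : Y → ℝ := fun y => margYU ν η y u / margU ν η u with hq
      have hsum : ∑ y, margYU μ η y u *
          Real.log ((margYU μ η y u / margU μ η u) / (margYU ν η y u / margU ν η u))
          = margU μ η u * ∑ y, p y * Real.log (p y / q y) := by
        rw [Finset.mul_sum]
        refine Finset.sum_congr rfl fun y _ => ?_
        rw [hp, hq]
        dsimp only
        rw [show margU μ η u * (margYU μ η y u / margU μ η u *
          Real.log ((margYU μ η y u / margU μ η u) / (margYU ν η y u / margU ν η u)))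
          = (margU μ η u * (margYU μ η y u / margU μ η u)) *
          Real.log ((margYU μ η y u / margU μ η u) / (margYU ν η y u / margU ν η u)) by ring,
          mul_div_cancel₀ _ hu.ne']
      rw [hsum]
      refine mul_nonneg hu.le ?_
      have hps : ∑ y, p y = 1 := by
        rw [hp]; dsimp only
        rw [← Finset.sum_div, sum_margYU μ η u, div_self hu.ne']
      have hqs : ∑ y, q y = 1 := by
        rw [hq]; dsimp only
        rw [← Finset.sum_div, sum_margYU ν η u, div_self hνu.ne']
      have := gibbs_sum p q
        (fun y => div_nonneg (margYU_nonneg μ η hμ0 y u) hu.le)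
        (fun y => div_nonneg (margYU_nonneg ν η hν0 y u) hνu.le)
        (fun y hy => by
          rw [hq] at hy; dsimp only at hy
          have : margYU ν η y u = 0 := by
            rcases div_eq_zero_iff.mp hy with h' | h'
            · exact h'
            · exact absurd h' hνu.ne'
          rw [hp]; dsimp only
          rw [zYU y u this, zero_div])
      rw [hps, hqs] at this
      linarith
  linarith
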